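/- Let R be a complete discrete valuation ring of mixed characteristic (0,p) with uniformizer π, residue field k, and let n ≥ 1 satisfy n(p−1) < v(ζ−1)(p−1) = v(p), i.e. n < v(λ) where λ = ζ−1 for a primitive p-th root of unity ζ ∈ R. Let A be a flat R-algebra with reduction Ā = A/πA, and let u ∈ A. If Z satisfies Z^p = 1 + π^{pn} u with Z = 1 + π^n X for some X integral over A, then the reduction x of X in the corresponding extension of Ā satisfies x^p = ū, where ū is the reduction of u. In particular, if ū is not a p-th power in Ā, the reduction of the degree-p Kummer extension A[Z]/(Z^p − 1 − π^{pn}u) is the purely inseparable (radicial) extension Ā[x]/(x^p − ū). -/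

import Mathlib

open Finset

lemma flat_smul_regular {R B : Type*} [CommRing R] [IsDomain R] [AddCommGroup B]
    [Module R B] [Module.Flat R B] {r : R} (hr : r ≠ 0) : IsSMulRegular B r := by
  have h : IsSMulRegular R r := fun x y hxy => by
    simp only [smul_eq_mul] at hxy
    exact mul_left_cancel₀ hr hxy
  have h2 : IsSMulRegular (TensorProduct R B R) r := h.lTensor (M := B)
  exact ((TensorProduct.rid R B).isSMulRegular_congr r).mp h2

/-- **Degeneration of a `μ_p`-Kummer torsor to an `α_p`-torsor (cf. 1.3.1).**
Let `R` be a complete discrete valuation ring of mixed characteristic `(0, p)` with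
uniformizer `π`, containing a primitive `p`-th root of unity `ζ`, with `λ := ζ - 1`,
and let `1 ≤ n` satisfy `n < v(λ)` (i.e. `π^{n+1} ∣ λ`).  Let `A` be a flat `R`-algebra
and `u ∈ A`.  If, in an extension `B` of `A` (flat over `R`), an element `X` integral
over `A` satisfies `Z^p = 1 + π^{pn} u` with `Z = 1 + π^n X`, then the reduction `x` of
`X` modulo `π` satisfies `x^p = ū`: that is, `X^p - u` lies in the extension to `B` of
the maximal ideal of `R`. -/
theorem statement17 (R : Type*) [CommRing R] [IsDomain R] [IsDiscreteValuationRing R]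
    [CharZero R]
    (p : ℕ) (hp : p.Prime)
    (hres : CharP (IsLocalRing.ResidueField R) p)
    [IsAdicComplete (IsLocalRing.maximalIdeal R) R]
    (π : R) (hπ : Irreducible π)
    (ζ : R) (hζ : IsPrimitiveRoot ζ p)
    (n : ℕ) (hn : 1 ≤ n) (hlt : π ^ (n + 1) ∣ (ζ - 1))
    (A : Type*) [CommRing A] [Algebra R A] [Module.Flat R A] (u : A)
    (B : Type*) [CommRing B] [Algebra R B] [Algebra A B] [IsScalarTower R A B]
    [Module.Flat R B]
    (X : B) (hX : IsIntegral A X)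
    (hZ : (1 + (algebraMap R B π) ^ n * X) ^ p
        = 1 + (algebraMap R B π) ^ (p * n) * algebraMap A B u) :
    X ^ p - algebraMap A B u ∈ Ideal.map (algebraMap R B) (IsLocalRing.maximalIdeal R) := by
  have hp2 : 2 ≤ p := hp.two_le
  set π' : B := algebraMap R B π with hπ'
  set u' : B := algebraMap A B u with hu'
  set c : B := π' ^ n * X with hc
  -- p is divisible by (ζ-1)^(p-1), hence by π^((n+1)*(p-1))
  obtain ⟨z, -, hz⟩ := hζ.self_sub_one_pow_dvd_order (k := p - 1) (by omega)
  have hpdvd : π ^ ((n + 1) * (p - 1)) ∣ (p : R) := by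
    rw [hz, pow_mul]
    exact Dvd.dvd.mul_left (pow_dvd_pow_of_dvd hlt _) z
  -- expand the binomial
  have hsum : ∑ k ∈ range (p + 1), c ^ k * (p.choose k : B) = 1 + π' ^ (p * n) * u' := by
    rw [← hZ, add_comm 1 c, add_pow]
    simp
  rw [Finset.sum_range_succ, Nat.choose_self, Nat.cast_one, mul_one] at hsum
  have hsum2 : ∑ k ∈ range p, c ^ k * (p.choose k : B)
      = 1 + ∑ k ∈ Ico 1 p, c ^ k * (p.choose k : B) := by
    rw [Finset.range_eq_Ico, Finset.sum_eq_sum_Ico_succ_bot (by omega : 0 < p)]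
    simp
  rw [hsum2] at hsum
  -- main divisibility
  have hdvd : (π' ^ (p * n + 1)) ∣ ∑ k ∈ Ico 1 p, c ^ k * (p.choose k : B) := by
    refine Finset.dvd_sum fun k hk => ?_
    rw [Finset.mem_Ico] at hk
    obtain ⟨m, hm⟩ := hp.dvd_choose_self (by omega : k ≠ 0) hk.2
    have hpB : π' ^ ((n + 1) * (p - 1)) ∣ ((p : ℕ) : B) := by
      have := map_dvd (algebraMap R B) hpdvd
      simpa [map_pow, map_natCast] using this
    have h1 : π' ^ (n * k + (n + 1) * (p - 1)) ∣ c ^ k * (p.choose k : B) := by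
      rw [hm, hc, mul_pow, ← pow_mul, pow_add, Nat.cast_mul]
      exact mul_dvd_mul (dvd_mul_right _ _) (Dvd.dvd.mul_right hpB _)
    refine dvd_trans (pow_dvd_pow π' ?_) h1
    have h2 : n * 1 ≤ n * k := Nat.mul_le_mul_left n hk.1
    have hq : p = (p - 1) + 1 := by omega
    calc p * n + 1 = ((p - 1) + 1) * n + 1 := by rw [← hq]
      _ ≤ n * k + (n + 1) * (p - 1) := by
          nlinarith [h2, hn, show 1 ≤ p - 1 by omega]
  obtain ⟨w, hw⟩ := hdvd
  -- isolate
  have key : π' ^ (p * n) * (X ^ p - u') = π' ^ (p * n) * (π' * (-w)) := by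
    have hcp : c ^ p = π' ^ (p * n) * X ^ p := by
      rw [hc, mul_pow, ← pow_mul, mul_comm n p]
    rw [hcp] at hsum
    have : π' ^ (p * n) * X ^ p - π' ^ (p * n) * u' = -(π' ^ (p * n + 1) * w) := by
      rw [← hw]; ring_nf
      ring_nf at hsum
      linear_combination hsum
    rw [mul_sub, this, pow_succ]
    ring
  -- cancel π'^(p*n)
  have hreg : IsSMulRegular B (π ^ (p * n)) :=
    flat_smul_regular (pow_ne_zero _ hπ.ne_zero)
  have hXu : X ^ p - u' = π' * (-w) := by
    apply hreg
    simpa [Algebra.smul_def, hπ', map_pow] using key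
  rw [hXu]
  have hπmem : π ∈ IsLocalRing.maximalIdeal R := hπ.not_isUnit
  exact Ideal.mul_mem_right _ _ (Ideal.mem_map_of_mem _ hπmem)
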